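/- Let N ≥ 1 and work in ℝ^N (EuclideanSpace ℝ (Fin N)). Let d : Fin N → ℝ with d_j ≥ 0 for all j, let α > 0, let w, Ψ ∈ ℝ^N with Ψ_0 = 0 (the first coordinate of Ψ vanishes). Define G(Φ) = (1/2)·∑_j d_j·Φ_j², let P₁w be the vector w with its first coordinate replaced by 0, and define Φ⁺ coordinatewise by Φ⁺_j = (Ψ_j − α·(P₁w)_j)/(1 + α·d_j). Then Φ⁺_0 = 0, and for every Φ ∈ ℝ^N with Φ_0 = 0, G(Φ⁺) + ⟪w, Φ⁺ − Ψ⟫ + (1/(2α))·‖Φ⁺ − Ψ‖² ≤ G(Φ) + ⟪w, Φ − Ψ⟫ + (1/(2α))·‖Φ − Ψ‖². That is, Φ⁺ = (I + αD)⁻¹(Ψ − α·P₁w) is the minimizer of the quadratic Bregman proximal subproblem over the mass-conservation constraint set {Φ : Φ_0 = 0}, where D = diag(d). -/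

import Mathlib

open RealInnerProductSpace

lemma coord_min (d α ψ w x : ℝ) (hd : 0 ≤ d) (hα : 0 < α)
    (hx : x = (ψ - α * w) / (1 + α * d)) (y : ℝ) :
    (1 / 2) * (d * x ^ 2) + w * (x - ψ) + (1 / (2 * α)) * (x - ψ) ^ 2 ≤
      (1 / 2) * (d * y ^ 2) + w * (y - ψ) + (1 / (2 * α)) * (y - ψ) ^ 2 := by
  have h1 : 0 < 1 + α * d := by positivity
  have hxe : (1 + α * d) * x = ψ - α * w := by
    rw [hx]; field_simp
  rw [← sub_nonneg]
  have heq : (1 / 2) * (d * y ^ 2) + w * (y - ψ) + (1 / (2 * α)) * (y - ψ) ^ 2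
      - ((1 / 2) * (d * x ^ 2) + w * (x - ψ) + (1 / (2 * α)) * (x - ψ) ^ 2)
      = ((1 + α * d) / (2 * α)) * (y - x) ^ 2 := by
    subst hx
    field_simp
    ring
  rw [heq]
  positivity

theorem pfc_quadratic_prox_closed_form
    (N : ℕ) (hN : 0 < N)
    (d : Fin N → ℝ) (hd : ∀ j, 0 ≤ d j)
    (α : ℝ) (hα : 0 < α)
    (w Ψ : EuclideanSpace ℝ (Fin N))
    (hΨ : Ψ ⟨0, hN⟩ = 0)
    (G : EuclideanSpace ℝ (Fin N) → ℝ)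
    (hG : ∀ Φ : EuclideanSpace ℝ (Fin N), G Φ = (1 / 2) * ∑ j, d j * Φ j ^ 2)
    (P₁w : EuclideanSpace ℝ (Fin N))
    (hP₁w : ∀ j : Fin N, P₁w j = if j = ⟨0, hN⟩ then 0 else w j)
    (Φp : EuclideanSpace ℝ (Fin N))
    (hΦp : ∀ j : Fin N, Φp j = (Ψ j - α * P₁w j) / (1 + α * d j)) :
    Φp ⟨0, hN⟩ = 0 ∧
      ∀ Φ : EuclideanSpace ℝ (Fin N), Φ ⟨0, hN⟩ = 0 →
        G Φp + ⟪w, Φp - Ψ⟫ + (1 / (2 * α)) * ‖Φp - Ψ‖ ^ 2 ≤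
          G Φ + ⟪w, Φ - Ψ⟫ + (1 / (2 * α)) * ‖Φ - Ψ‖ ^ 2 := by
  have hΦp0 : Φp ⟨0, hN⟩ = 0 := by
    rw [hΦp, hP₁w]; simp [hΨ]
  refine ⟨hΦp0, fun Φ hΦ0 => ?_⟩
  have key : ∀ (x : EuclideanSpace ℝ (Fin N)),
      G x + ⟪w, x - Ψ⟫ + (1 / (2 * α)) * ‖x - Ψ‖ ^ 2 =
        ∑ j, ((1 / 2) * (d j * x j ^ 2) + w j * (x j - Ψ j)
          + (1 / (2 * α)) * (x j - Ψ j) ^ 2) := by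
    intro x
    have hn : ‖x - Ψ‖ ^ 2 = ∑ j, (x j - Ψ j) ^ 2 := by
      rw [← real_inner_self_eq_norm_sq]
      simp only [PiLp.inner_apply, RCLike.inner_apply, conj_trivial, PiLp.sub_apply, sq]
    rw [hG, hn, PiLp.inner_apply]
    simp only [PiLp.sub_apply, RCLike.inner_apply, conj_trivial]
    rw [Finset.mul_sum, Finset.mul_sum, ← Finset.sum_add_distrib, ← Finset.sum_add_distrib]
    exact Finset.sum_congr rfl fun j _ => by ring
  rw [key, key]
  apply Finset.sum_le_sum
  intro j _
  by_cases hj : j = ⟨0, hN⟩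
  · subst hj
    rw [hΦp0, hΦ0]
  · exact coord_min (d j) α (Ψ j) (w j) (Φp j) (hd j) hα
      (by rw [hΦp, hP₁w, if_neg hj]) (Φ j)
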